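/- arXiv:1406.2052 — 4 statements merged into one kernel-verified Lean document; each statement's English description precedes it below -/
import Mathlib

section
/- Let Q be a convex polytope in ℝ^D with vertices in ℤ^D, let E be an edge of Q, and let A ⊆ L(Q). Suppose A ∩ E = T_E(S), where S ⊆ ℤ and T_E : ℝ → ℝ^D is an injective affine transformation. Then there exists an injective affine transformation T' : ℝ → ℝ^D such that (A+A) ∩ (E+E) = T'(S+S). -/
open scoped Pointwise

noncomputable section

/-- Points of `ℝ^D` with the Euclidean metric. -/
abbrev Pt (D : ℕ) := EuclideanSpace ℝ (Fin D)

/-- `L(S)`: the set of lattice points of `S`, i.e. points of `S` all of whose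
coordinates are integers. -/
def latticePts {D : ℕ} (S : Set (Pt D)) : Set (Pt D) :=
  {x | x ∈ S ∧ ∀ i, ∃ z : ℤ, x i = (z : ℝ)}

/-- A convex polytope: the convex hull of a finite set of points. -/
def IsPolytope {D : ℕ} (P : Set (Pt D)) : Prop :=
  ∃ V : Set (Pt D), V.Finite ∧ P = convexHull ℝ V

/-- A convex polytope whose vertices (extreme points) all lie in `ℤ^D`. -/
def IsLatticePolytope {D : ℕ} (P : Set (Pt D)) : Prop :=
  IsPolytope P ∧ ∀ v ∈ Set.extremePoints ℝ P, ∀ i, ∃ z : ℤ, v i = (z : ℝ)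

/-- `u` and `v` are strictly antipodal vertices of `Q`: there are parallel supporting
hyperplanes `H₁, H₂` of `Q` (with common normal functional `f`) such that
`H₁ ∩ Q = {u}` and `H₂ ∩ Q = {v}`. -/
def StrictlyAntipodal {D : ℕ} (Q : Set (Pt D)) (u v : Pt D) : Prop :=
  ∃ f : Pt D →ₗ[ℝ] ℝ, f ≠ 0 ∧
    {x | x ∈ Q ∧ ∀ y ∈ Q, f y ≤ f x} = {u} ∧
    {x | x ∈ Q ∧ ∀ y ∈ Q, f x ≤ f y} = {v}

/-- The supporting cone of `Q` at `v`: `v + ⋃_{λ ≥ 0} λ (Q - v)`. -/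
def suppCone {D : ℕ} (Q : Set (Pt D)) (v : Pt D) : Set (Pt D) :=
  {v} + ⋃ (l : ℝ) (_ : 0 ≤ l), l • (Q - ({v} : Set (Pt D)))

/-- `Q` is locally point symmetric: its vertices can be partitioned into pairs
(given by a fixed-point-free involution `σ` of the vertex set) of strictly antipodal
vertices such that each pair `{u, v}` satisfies `C(u) - u = v - C(v)`. -/
def LocallyPointSymmetric {D : ℕ} (Q : Set (Pt D)) : Prop :=
  ∃ σ : Pt D → Pt D, ∀ v ∈ Set.extremePoints ℝ Q,
    σ v ∈ Set.extremePoints ℝ Q ∧ σ v ≠ v ∧ σ (σ v) = v ∧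
    StrictlyAntipodal Q v (σ v) ∧
    suppCone Q v - ({v} : Set (Pt D)) = ({σ v} : Set (Pt D)) - suppCone Q (σ v)

/-- `E` is an edge of `Q`: a 1-dimensional face, i.e. the intersection of `Q` with a
supporting hyperplane which is 1-dimensional. -/
def IsEdge {D : ℕ} (Q E : Set (Pt D)) : Prop :=
  (∃ f : Pt D →ₗ[ℝ] ℝ, f ≠ 0 ∧ E = {x | x ∈ Q ∧ ∀ y ∈ Q, f y ≤ f x}) ∧
    Module.finrank ℝ (affineSpan ℝ E).direction = 1

/-- `B_r(Q)`: lattice points of `Q` within distance `r` of some vertex of `Q`. -/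
def ballFringe {D : ℕ} (Q : Set (Pt D)) (r : ℝ) : Set (Pt D) :=
  {q | q ∈ latticePts Q ∧ ∃ v ∈ Set.extremePoints ℝ Q, dist q v ≤ r}

/-- `M_r(Q) = L(Q) \ B_r(Q)`: the middle lattice points of `Q`. -/
def middlePts {D : ℕ} (Q : Set (Pt D)) (r : ℝ) : Set (Pt D) :=
  latticePts Q \ ballFringe Q r

/-- `P` is point symmetric: `P = x - P` for some point `x`. -/
def PointSymmetric {D : ℕ} (P : Set (Pt D)) : Prop :=
  ∃ x : Pt D, P = ({x} : Set (Pt D)) - P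

/-- If `E` is an edge of a lattice polytope `Q`, `A ⊆ L(Q)`, and
`A ∩ E = T(S)` for an injective affine map `T : ℝ → ℝ^D` and `S ⊆ ℤ`, then there is an
injective affine map `T'` with `(A + A) ∩ (E + E) = T'(S + S)`. -/
theorem stmt6 {D : ℕ} (Q : Set (Pt D)) (hQ : IsLatticePolytope Q)
    (E : Set (Pt D)) (hE : IsEdge Q E) (A : Set (Pt D)) (hA : A ⊆ latticePts Q)
    (S : Set ℤ) (T : ℝ →ᵃ[ℝ] Pt D) (hT : Function.Injective T)
    (hAE : A ∩ E = ⇑T '' ((fun z : ℤ => (z : ℝ)) '' S)) :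
    ∃ T' : ℝ →ᵃ[ℝ] Pt D, Function.Injective T' ∧
      (A + A) ∩ (E + E) = ⇑T' '' ((fun z : ℤ => (z : ℝ)) '' (S + S)) := by
  obtain ⟨⟨f, hf0, hEdef⟩, _⟩ := hE
  have key : ∀ s t : ℝ, T (s + t) + T 0 = T s + T t := by
    intro s t
    have h1 := T.map_vadd t s
    have h2 := T.map_vadd 0 s
    simp only [vadd_eq_add, add_zero] at h1 h2
    rw [h1, h2]; abel
  refine ⟨T + AffineMap.const ℝ ℝ (T 0), ?_, ?_⟩
  · intro x y hxy
    simp only [AffineMap.coe_add, AffineMap.coe_const, Pi.add_apply,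
      Function.const_apply, add_left_inj] at hxy
    exact hT hxy
  · ext x
    constructor
    · rintro ⟨hxA, hxE⟩
      rw [Set.mem_add] at hxA hxE
      obtain ⟨a, ha, a', ha', hax⟩ := hxA
      obtain ⟨e, he, e', he', hex⟩ := hxE
      have heQ := (hEdef ▸ he : e ∈ {x | x ∈ Q ∧ ∀ y ∈ Q, f y ≤ f x})
      have heQ' := (hEdef ▸ he' : e' ∈ {x | x ∈ Q ∧ ∀ y ∈ Q, f y ≤ f x})
      have haQ : a ∈ Q := (hA ha).1
      have haQ' : a' ∈ Q := (hA ha').1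
      have hee : f e = f e' := le_antisymm (heQ'.2 e heQ.1) (heQ.2 e' heQ'.1)
      have hsum : f e + f e' = f a + f a' := by
        rw [← map_add, ← map_add, hex, hax]
      have hfa : f a = f e := by
        have h1 := heQ.2 a haQ
        have h2 := heQ.2 a' haQ'
        linarith
      have hfa' : f a' = f e := by
        have h1 := heQ.2 a haQ
        linarith
      have haE : a ∈ A ∩ E := ⟨ha, hEdef ▸ ⟨haQ, fun y hy => (heQ.2 y hy).trans_eq hfa.symm⟩⟩
      have haE' : a' ∈ A ∩ E := ⟨ha', hEdef ▸ ⟨haQ', fun y hy => (heQ.2 y hy).trans_eq hfa'.symm⟩⟩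
      rw [hAE] at haE haE'
      obtain ⟨s, ⟨m, hm, rfl⟩, rfl⟩ := haE
      obtain ⟨t, ⟨n, hn, rfl⟩, rfl⟩ := haE'
      refine ⟨((m + n : ℤ) : ℝ), ⟨m + n, Set.add_mem_add hm hn, rfl⟩, ?_⟩
      push_cast
      simp only [AffineMap.coe_add, AffineMap.coe_const, Pi.add_apply,
        Function.const_apply]
      rw [key, hax]
    · rintro ⟨_, ⟨k, hk, rfl⟩, rfl⟩
      rw [Set.mem_add] at hk
      obtain ⟨m, hm, n, hn, rfl⟩ := hk
      have hTm : T m ∈ A ∩ E := hAE ▸ ⟨(m : ℝ), ⟨m, hm, rfl⟩, rfl⟩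
      have hTn : T n ∈ A ∩ E := hAE ▸ ⟨(n : ℝ), ⟨n, hn, rfl⟩, rfl⟩
      have hval : (T + AffineMap.const ℝ ℝ (T 0)) ((↑(m + n) : ℝ)) = T m + T n := by
        push_cast
        simp only [AffineMap.coe_add, AffineMap.coe_const, Pi.add_apply,
          Function.const_apply]
        rw [key]
      rw [hval]
      exact ⟨Set.add_mem_add hTm.1 hTn.1, Set.add_mem_add hTm.2 hTn.2⟩
end
end

section
/- Let Q be a locally point symmetric convex polytope in ℝ^D with vertices in ℤ^D, and let A ⊆ L(Q). For a pair of strictly antipodal vertices v₁ and v₂ of Q, let E₁ and E₂ be parallel edges of Q with v₁ ∈ E₁ and v₂ ∈ E₂. Suppose A ∩ E₁ = T₁(S₁) and A ∩ E₂ = T₂(S₂), where S₁, S₂ ⊆ ℤ and T₁, T₂ : ℝ → ℝ^D are injective affine transformations with the same associated linear transformation. Then there exists an injective affine transformation T : ℝ → ℝ^D such that (A−A) ∩ (E₂−E₁) = T(S₂−S₁). -/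
open scoped Pointwise

noncomputable section

lemma mem_suppCone_iff {D : ℕ} {Q : Set (Pt D)} {v x : Pt D} :
    x ∈ suppCone Q v ↔ ∃ l : ℝ, 0 ≤ l ∧ ∃ q ∈ Q, x = v + l • (q - v) := by
  simp only [suppCone, Set.mem_add, Set.mem_singleton_iff, Set.mem_iUnion,
    Set.mem_smul_set, Set.mem_sub]
  constructor
  · rintro ⟨a, rfl, y, ⟨l, hl, z, ⟨q, hq, w, rfl, rfl⟩, rfl⟩, rfl⟩
    exact ⟨l, hl, q, hq, rfl⟩
  · rintro ⟨l, hl, q, hq, rfl⟩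
    exact ⟨v, rfl, l • (q - v), ⟨l, hl, q - v, ⟨q, hq, v, rfl, rfl⟩, rfl⟩, rfl⟩

lemma self_subset_suppCone {D : ℕ} {Q : Set (Pt D)} {v : Pt D} : Q ⊆ suppCone Q v := by
  intro x hx
  rw [mem_suppCone_iff]
  exact ⟨1, zero_le_one, x, hx, by simp⟩
/-- Let `Q` be a locally point symmetric lattice polytope, `A ⊆ L(Q)`,
`v₁, v₂` strictly antipodal vertices lying on parallel edges `E₁, E₂`, and suppose
`A ∩ E₁ = T₁(S₁)`, `A ∩ E₂ = T₂(S₂)` with `T₁, T₂` injective affine maps sharing the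
same linear part. Then `(A - A) ∩ (E₂ - E₁) = T(S₂ - S₁)` for some injective affine
map `T`. -/
theorem stmt7 {D : ℕ} (Q : Set (Pt D)) (hQ : IsLatticePolytope Q)
    (hlps : LocallyPointSymmetric Q) (A : Set (Pt D)) (hA : A ⊆ latticePts Q)
    (v₁ v₂ : Pt D) (hv₁ : v₁ ∈ Set.extremePoints ℝ Q) (hv₂ : v₂ ∈ Set.extremePoints ℝ Q)
    (hanti : StrictlyAntipodal Q v₁ v₂)
    (E₁ E₂ : Set (Pt D)) (hE₁ : IsEdge Q E₁) (hE₂ : IsEdge Q E₂)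
    (hpar : (affineSpan ℝ E₁).direction = (affineSpan ℝ E₂).direction)
    (hv₁E : v₁ ∈ E₁) (hv₂E : v₂ ∈ E₂)
    (S₁ S₂ : Set ℤ) (T₁ T₂ : ℝ →ᵃ[ℝ] Pt D)
    (hT₁ : Function.Injective T₁) (hT₂ : Function.Injective T₂)
    (hlin : T₁.linear = T₂.linear)
    (hAE₁ : A ∩ E₁ = ⇑T₁ '' ((fun z : ℤ => (z : ℝ)) '' S₁))
    (hAE₂ : A ∩ E₂ = ⇑T₂ '' ((fun z : ℤ => (z : ℝ)) '' S₂)) :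
    ∃ T : ℝ →ᵃ[ℝ] Pt D, Function.Injective T ∧
      (A - A) ∩ (E₂ - E₁) = ⇑T '' ((fun z : ℤ => (z : ℝ)) '' (S₂ - S₁)) := by
  classical
  -- Unpack hypotheses
  obtain ⟨σ, hσ⟩ := hlps
  obtain ⟨hwext, -, -, -, hcone⟩ := hσ v₂ hv₂
  obtain ⟨f, -, hfmax, hfmin⟩ := hanti
  obtain ⟨⟨g₁, -, hg₁E⟩, -⟩ := hE₁
  obtain ⟨⟨g₂, -, hg₂E⟩, -⟩ := hE₂
  have hE₁Q : E₁ ⊆ Q := by rw [hg₁E]; exact fun x hx => hx.1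
  have hE₂Q : E₂ ⊆ Q := by rw [hg₂E]; exact fun x hx => hx.1
  have hv₂Q : v₂ ∈ Q := hv₂.1
  have hv₁Q : v₁ ∈ Q := hv₁.1
  have hwQ : σ v₂ ∈ Q := hwext.1
  -- Reflection at v₂ via local point symmetry
  have hreflσ : ∀ x ∈ suppCone Q (σ v₂), ∃ l : ℝ, 0 ≤ l ∧ ∃ q ∈ Q,
      σ v₂ - x = l • (q - v₂) := by
    intro x hx
    have h1 : σ v₂ - x ∈ ({σ v₂} : Set (Pt D)) - suppCone Q (σ v₂) :=
      Set.sub_mem_sub rfl hx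
    rw [← hcone] at h1
    obtain ⟨y, hy, z, hz, hyz⟩ := Set.mem_sub.mp h1
    obtain ⟨l, hl, q, hq, rfl⟩ := mem_suppCone_iff.mp hy
    have hz' : z = v₂ := hz
    refine ⟨l, hl, q, hq, ?_⟩
    rw [← hyz, hz']
    abel
  -- v₂ is the unique f-minimizer
  have hv₂min : ∀ y ∈ Q, f v₂ ≤ f y := by
    have h : v₂ ∈ {x | x ∈ Q ∧ ∀ y ∈ Q, f x ≤ f y} := by rw [hfmin]; rfl
    exact h.2
  -- σ v₂ maximizes f, hence equals v₁
  have hσv₁ : σ v₂ = v₁ := by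
    have hwmax : ∀ y ∈ Q, f y ≤ f (σ v₂) := by
      intro y hy
      obtain ⟨l, hl, q, hq, hlq⟩ := hreflσ y (self_subset_suppCone hy)
      have he : f (σ v₂) - f y = l * (f q - f v₂) := by
        simpa [map_sub, map_smul, smul_eq_mul] using congrArg f hlq
      have h2 : 0 ≤ l * (f q - f v₂) :=
        mul_nonneg hl (by linarith [hv₂min q hq])
      linarith
    have h : σ v₂ ∈ {x | x ∈ Q ∧ ∀ y ∈ Q, f y ≤ f x} := ⟨hwQ, hwmax⟩
    rw [hfmax] at h
    exact h
  rw [hσv₁] at hreflσ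
  -- facts about g₂ (functional of the edge E₂)
  have hmax₂ : ∀ y ∈ Q, g₂ y ≤ g₂ v₂ := by
    have h : v₂ ∈ {x | x ∈ Q ∧ ∀ y ∈ Q, g₂ y ≤ g₂ x} := by rw [← hg₂E]; exact hv₂E
    exact h.2
  have hE₂val : ∀ e ∈ E₂, g₂ e = g₂ v₂ := by
    intro e he
    have h : e ∈ {x | x ∈ Q ∧ ∀ y ∈ Q, g₂ y ≤ g₂ x} := by rw [← hg₂E]; exact he
    exact le_antisymm (hmax₂ e h.1) (h.2 v₂ hv₂Q)
  have hmax₁ : ∀ y ∈ Q, g₁ y ≤ g₁ v₁ := by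
    have h : v₁ ∈ {x | x ∈ Q ∧ ∀ y ∈ Q, g₁ y ≤ g₁ x} := by rw [← hg₁E]; exact hv₁E
    exact h.2
  have hE₁val : ∀ e ∈ E₁, g₁ e = g₁ v₁ := by
    intro e he
    have h : e ∈ {x | x ∈ Q ∧ ∀ y ∈ Q, g₁ y ≤ g₁ x} := by rw [← hg₁E]; exact he
    exact le_antisymm (hmax₁ e h.1) (h.2 v₁ hv₁Q)
  -- g₂ vanishes on the common edge direction
  have hdir₂ : ∀ u ∈ (affineSpan ℝ E₂).direction, g₂ u = 0 := by
    intro u hu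
    rw [direction_affineSpan, vectorSpan_def] at hu
    induction hu using Submodule.span_induction with
    | mem x hx =>
      obtain ⟨a, ha, b, hb, rfl⟩ := hx
      simp [vsub_eq_sub, map_sub, hE₂val a ha, hE₂val b hb]
    | zero => simp
    | add x y _ _ hx hy => simp [map_add, hx, hy]
    | smul c x _ hx => simp [map_smul, hx]
  have hdir₁ : ∀ u ∈ (affineSpan ℝ E₁).direction, g₁ u = 0 := by
    intro u hu
    rw [direction_affineSpan, vectorSpan_def] at hu
    induction hu using Submodule.span_induction with
    | mem x hx =>
      obtain ⟨a, ha, b, hb, rfl⟩ := hx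
      simp [vsub_eq_sub, map_sub, hE₁val a ha, hE₁val b hb]
    | zero => simp
    | add x y _ _ hx hy => simp [map_add, hx, hy]
    | smul c x _ hx => simp [map_smul, hx]
  -- g₂ is constant on E₁, equal to g₂ v₁
  have hg₂E₁ : ∀ e ∈ E₁, g₂ e = g₂ v₁ := by
    intro e he
    have h : e - v₁ ∈ (affineSpan ℝ E₂).direction := by
      rw [← hpar]
      simpa [vsub_eq_sub] using
        AffineSubspace.vsub_mem_direction (mem_affineSpan ℝ he) (mem_affineSpan ℝ hv₁E)
    have h2 : g₂ e - g₂ v₁ = 0 := by simpa [map_sub] using hdir₂ _ h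
    linarith
  -- g₂ attains its minimum over Q at v₁
  have hmin₂ : ∀ x ∈ Q, g₂ v₁ ≤ g₂ x := by
    intro x hx
    obtain ⟨l, hl, q, hq, hlq⟩ := hreflσ x (self_subset_suppCone hx)
    have he : g₂ v₁ - g₂ x = l * (g₂ q - g₂ v₂) := by
      simpa [map_sub, map_smul, smul_eq_mul] using congrArg g₂ hlq
    have h2 : 0 ≤ l * (g₂ v₂ - g₂ q) :=
      mul_nonneg hl (by linarith [hmax₂ q hq])
    nlinarith [he, h2]
  -- membership criteria for E₂ and E₁ in terms of g₂
  have hmemE₂ : ∀ x ∈ Q, g₂ v₂ ≤ g₂ x → x ∈ E₂ := by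
    intro x hx hgx
    rw [hg₂E]
    exact ⟨hx, fun y hy => le_trans (hmax₂ y hy) hgx⟩
  have hmemE₁ : ∀ x ∈ Q, g₂ x ≤ g₂ v₁ → x ∈ E₁ := by
    intro x hx hgx
    obtain ⟨l, hl, q, hq, hlq⟩ := hreflσ x (self_subset_suppCone hx)
    have he : g₂ v₁ - g₂ x = l * (g₂ q - g₂ v₂) := by
      simpa [map_sub, map_smul, smul_eq_mul] using congrArg g₂ hlq
    have hx0 : g₂ x = g₂ v₁ := le_antisymm hgx (hmin₂ x hx)
    have h0 : l * (g₂ q - g₂ v₂) = 0 := by linarith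
    rcases mul_eq_zero.mp h0 with h0 | h0
    · have hxv : v₁ - x = 0 := by rw [hlq, h0, zero_smul]
      have hxv' : x = v₁ := by
        have := sub_eq_zero.mp hxv
        exact this.symm
      rw [hxv']
      exact hv₁E
    · have hqE : q ∈ E₂ := hmemE₂ q hq (by linarith)
      have hd : l • (q - v₂) ∈ (affineSpan ℝ E₁).direction := by
        rw [hpar]
        refine Submodule.smul_mem _ l ?_
        simpa [vsub_eq_sub] using
          AffineSubspace.vsub_mem_direction (mem_affineSpan ℝ hqE) (mem_affineSpan ℝ hv₂E)
      have hg1 : g₁ (v₁ - x) = 0 := by rw [hlq]; exact hdir₁ _ hd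
      have hx1 : g₁ x = g₁ v₁ := by
        have h3 : g₁ v₁ - g₁ x = 0 := by simpa [map_sub] using hg1
        linarith
      rw [hg₁E]
      exact ⟨hx, fun y hy => le_trans (hmax₁ y hy) (le_of_eq hx1.symm)⟩
  -- the affine map T
  have hd2 : ∀ r : ℝ, T₂ r = T₂.linear r + T₂ 0 := fun r => by
    have h := congrFun T₂.decomp r
    simpa using h
  have hd1 : ∀ r : ℝ, T₁ r = T₂.linear r + T₁ 0 := fun r => by
    have h := congrFun T₁.decomp r
    rw [hlin] at h
    simpa using h
  refine ⟨{ toFun := fun r => T₂.linear r + (T₂ 0 - T₁ 0), linear := T₂.linear,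
            map_vadd' := by intro p v; simp [map_add]; abel }, ?_, ?_⟩
  · intro x y hxy
    simp only [AffineMap.coe_mk] at hxy
    have hlin2 : T₂.linear x = T₂.linear y := by
      have := add_right_cancel hxy
      exact this
    have : T₂ x = T₂ y := by rw [hd2 x, hd2 y, hlin2]
    exact hT₂ this
  · have hTapp : ∀ x y : ℝ,
        ({ toFun := fun r => T₂.linear r + (T₂ 0 - T₁ 0), linear := T₂.linear,
           map_vadd' := by intro p v; simp [map_add]; abel } : ℝ →ᵃ[ℝ] Pt D) (x - y)
          = T₂ x - T₁ y := by
      intro x y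
      show T₂.linear (x - y) + (T₂ 0 - T₁ 0) = T₂ x - T₁ y
      rw [map_sub, hd2 x, hd1 y]
      abel
    ext x
    constructor
    · rintro ⟨hxAA, hxE⟩
      obtain ⟨a, ha, a', ha', rfl⟩ := Set.mem_sub.mp hxAA
      obtain ⟨e₂, he₂, e₁, he₁, heq⟩ := Set.mem_sub.mp hxE
      have haQ : a ∈ Q := (hA ha).1
      have ha'Q : a' ∈ Q := (hA ha').1
      have hga : g₂ a - g₂ a' = g₂ v₂ - g₂ v₁ := by
        have h1 : g₂ a - g₂ a' = g₂ e₂ - g₂ e₁ := by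
          have := congrArg g₂ heq
          simp only [map_sub] at this
          linarith [this]
        rw [h1, hE₂val e₂ he₂, hg₂E₁ e₁ he₁]
      have haE₂' : a ∈ E₂ :=
        hmemE₂ a haQ (by linarith [hmax₂ a haQ, hmin₂ a' ha'Q])
      have ha'E₁' : a' ∈ E₁ :=
        hmemE₁ a' ha'Q (by linarith [hmax₂ a haQ, hmin₂ a' ha'Q])
      have haMem : a ∈ A ∩ E₂ := ⟨ha, haE₂'⟩
      have ha'Mem : a' ∈ A ∩ E₁ := ⟨ha', ha'E₁'⟩
      rw [hAE₂] at haMem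
      rw [hAE₁] at ha'Mem
      obtain ⟨r₂, ⟨s₂, hs₂, rfl⟩, ha2⟩ := haMem
      obtain ⟨r₁, ⟨s₁, hs₁, rfl⟩, ha1⟩ := ha'Mem
      refine ⟨((s₂ - s₁ : ℤ) : ℝ), ⟨s₂ - s₁, Set.sub_mem_sub hs₂ hs₁, rfl⟩, ?_⟩
      push_cast
      rw [hTapp, ha2, ha1]
    · rintro ⟨r, ⟨z, hz, rfl⟩, rfl⟩
      obtain ⟨s₂, hs₂, s₁, hs₁, rfl⟩ := Set.mem_sub.mp hz
      have hmem₂ : T₂ ((s₂ : ℝ)) ∈ A ∩ E₂ := by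
        rw [hAE₂]
        exact ⟨(s₂ : ℝ), ⟨s₂, hs₂, rfl⟩, rfl⟩
      have hmem₁ : T₁ ((s₁ : ℝ)) ∈ A ∩ E₁ := by
        rw [hAE₁]
        exact ⟨(s₁ : ℝ), ⟨s₁, hs₁, rfl⟩, rfl⟩
      have hcast : ((fun z : ℤ => (z : ℝ)) (s₂ - s₁)) = (s₂ : ℝ) - (s₁ : ℝ) := by
        push_cast; ring
      rw [hcast, hTapp]
      exact ⟨Set.sub_mem_sub hmem₂.1 hmem₁.1, Set.sub_mem_sub hmem₂.2 hmem₁.2⟩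
end
end

section
/- Let Q ⊆ ℝ^D be a compact convex set, and suppose H₁ and H₂ are parallel supporting hyperplanes of Q such that H₁ ∩ Q = {v} for a single point v and H₂ ∩ Q = F for some set F ⊆ Q. Then for every f ∈ F, the difference f − v is uniquely formed in Q − Q: the only pair (p,q) ∈ Q × Q with p − q = f − v is (f, v). -/
open scoped Pointwise

noncomputable section

/-- Let `Q ⊆ ℝ^D` be compact and convex, and let `H₁ = {g = c₁}` and
`H₂ = {g = c₂}` be parallel supporting hyperplanes of `Q` (so `Q` lies in the slab
`c₁ ≤ g ≤ c₂`) with `H₁ ∩ Q = {v}` and `H₂ ∩ Q = F`. Then for every `f ∈ F` the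
difference `f - v` is uniquely formed in `Q - Q`. -/
theorem stmt11 {D : ℕ} (Q : Set (Pt D)) (hQc : IsCompact Q) (hQconv : Convex ℝ Q)
    (g : Pt D →ₗ[ℝ] ℝ) (hg : g ≠ 0) (c₁ c₂ : ℝ)
    (hlow : ∀ x ∈ Q, c₁ ≤ g x) (hhigh : ∀ x ∈ Q, g x ≤ c₂)
    (v : Pt D) (hv : {x | x ∈ Q ∧ g x = c₁} = {v})
    (F : Set (Pt D)) (hF : {x | x ∈ Q ∧ g x = c₂} = F) :
    ∀ f ∈ F, ∀ p ∈ Q, ∀ q ∈ Q, p - q = f - v → p = f ∧ q = v := by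
  intro f hf p hp q hq hpq
  have hvQ : v ∈ Q ∧ g v = c₁ := by
    have : v ∈ ({v} : Set (Pt D)) := rfl
    rw [← hv] at this; exact this
  have hfQ : f ∈ Q ∧ g f = c₂ := by rw [← hF] at hf; exact hf
  have hg' : g p - g q = c₂ - c₁ := by
    have := congrArg g hpq
    simpa [map_sub, hfQ.2, hvQ.2] using this
  have hq1 : g q = c₁ := by
    have := hhigh p hp
    have := hlow q hq
    linarith
  have hqv : q = v := by
    have : q ∈ {x | x ∈ Q ∧ g x = c₁} := ⟨hq, hq1⟩
    rw [hv] at this; exact this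
  subst hqv
  exact ⟨by rw [sub_left_inj] at hpq; exact hpq, rfl⟩
end
end

section
/- Let P be a convex polytope in ℝ^D with vertices in ℤ^D, let n ∈ ℕ, let r > 0, and fix a fringe set F_r ⊆ B_r(nP) such that exactly l points of B_r(nP) are absent from F_r. Let k ∈ M_r(nP+nP). Then among all subsets S ⊆ L(nP) satisfying S ∩ B_r(nP) = F_r, the proportion of those with k ∉ S+S is at most (3/4)^{|L(nP ∩ (k − nP))|/2 − l}. -/
open scoped Pointwise

noncomputable section

lemma coord_le_norm {D : ℕ} (x : Pt D) (i : Fin D) : |x i| ≤ ‖x‖ := by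
  rw [EuclideanSpace.norm_eq]
  have h1 : |x i| ^ 2 ≤ ∑ j, ‖x j‖ ^ 2 := by
    simpa [Real.norm_eq_abs] using
      Finset.single_le_sum (f := fun j => ‖x j‖ ^ 2) (fun j _ => sq_nonneg _) (Finset.mem_univ i)
  calc |x i| = Real.sqrt (|x i| ^ 2) := by rw [Real.sqrt_sq (abs_nonneg _)]
    _ ≤ _ := Real.sqrt_le_sqrt h1

lemma lattice_finite {D : ℕ} {S : Set (Pt D)} (hS : Bornology.IsBounded S) :
    (latticePts S).Finite := by
  obtain ⟨M, hM⟩ := isBounded_iff_forall_norm_le.1 hS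
  have hfin : (Set.pi Set.univ (fun _ : Fin D => Set.Icc (-⌈M⌉) ⌈M⌉)).Finite :=
    Set.Finite.pi (fun _ => Set.finite_Icc _ _)
  apply Set.Finite.subset ((hfin.image (fun f : Fin D → ℤ => (WithLp.toLp 2 (fun i => (f i : ℝ)) : Pt D))))
  rintro x ⟨hxS, hxZ⟩
  choose z hzx using hxZ
  refine ⟨z, ?_, ?_⟩
  · intro i _
    have hb : |(z i : ℝ)| ≤ M := by rw [← hzx i]; exact (coord_le_norm x i).trans (hM x hxS)
    have h1 : (z i : ℝ) ≤ ⌈M⌉ := le_trans (abs_le.1 hb).2 (Int.le_ceil M)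
    have h2 : (-⌈M⌉ : ℝ) ≤ z i := by
      have := (abs_le.1 hb).1
      have hM' : (-(⌈M⌉:ℝ)) ≤ -M := by simpa using Int.le_ceil M
      linarith
    exact ⟨by exact_mod_cast h2, by exact_mod_cast h1⟩
  · ext i; exact (hzx i).symm

lemma count_avoid {α : Type*} [DecidableEq α] (𝒞 : Finset (Finset α)) :
    ∀ (Ω : Finset α), (∀ C ∈ 𝒞, C ⊆ Ω) → (∀ C ∈ 𝒞, C.Nonempty) → (∀ C ∈ 𝒞, C.card ≤ 2) →
    (∀ C ∈ 𝒞, ∀ C' ∈ 𝒞, C ≠ C' → Disjoint C C') →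
    (Ω.powerset.filter (fun S => ∀ C ∈ 𝒞, ¬ C ⊆ S)).card * 4 ^ 𝒞.card ≤
      3 ^ 𝒞.card * 2 ^ Ω.card := by
  induction 𝒞 using Finset.induction_on with
  | empty =>
    intro Ω _ _ _ _
    simpa using (Finset.card_filter_le Ω.powerset _).trans_eq (Finset.card_powerset Ω)
  | @insert C 𝒞' hC ih =>
    intro Ω h1 h2 h3 h4
    have hCΩ : C ⊆ Ω := h1 C (Finset.mem_insert_self _ _)
    have hCcard : C.card ≤ 2 := h3 C (Finset.mem_insert_self _ _)
    set A := Ω.powerset.filter (fun S => ∀ C' ∈ insert C 𝒞', ¬ C' ⊆ S) with hA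
    set A' := (Ω \ C).powerset.filter (fun S => ∀ C' ∈ 𝒞', ¬ C' ⊆ S) with hA'
    have hinj : A.card ≤ ((C.powerset.erase C) ×ˢ A').card := by
      apply Finset.card_le_card_of_injOn (fun S => (S ∩ C, S \ C))
      · intro S hS
        simp only [hA, Finset.mem_coe, Finset.mem_filter, Finset.mem_powerset] at hS
        obtain ⟨hSΩ, hScon⟩ := hS
        have hnC : ¬ C ⊆ S := hScon C (Finset.mem_insert_self _ _)
        refine Finset.mem_product.2 ⟨?_, ?_⟩
        · refine Finset.mem_erase.2 ⟨?_, Finset.mem_powerset.2 Finset.inter_subset_right⟩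
          intro h
          exact hnC (by rw [← h]; exact Finset.inter_subset_left)
        · simp only [hA', Finset.mem_filter, Finset.mem_powerset]
          constructor
          · intro x hx
            rw [Finset.mem_sdiff] at hx ⊢
            exact ⟨hSΩ hx.1, hx.2⟩
          · intro C' hC' hsub
            exact hScon C' (Finset.mem_insert_of_mem hC') (hsub.trans Finset.sdiff_subset)
      · intro S hS S' hS' h
        have h1' : S ∩ C = S' ∩ C := congrArg Prod.fst h
        have h2' : S \ C = S' \ C := congrArg Prod.snd h
        have key : ∀ T : Finset α, (T ∩ C) ∪ (T \ C) = T := by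
          intro T; ext x
          simp only [Finset.mem_union, Finset.mem_inter, Finset.mem_sdiff]; tauto
        rw [← key S, ← key S', h1', h2']
    have hprod : ((C.powerset.erase C) ×ˢ A').card = (2 ^ C.card - 1) * A'.card := by
      rw [Finset.card_product, Finset.card_erase_of_mem (Finset.mem_powerset_self C),
        Finset.card_powerset]
    have hih : A'.card * 4 ^ 𝒞'.card ≤ 3 ^ 𝒞'.card * 2 ^ (Ω \ C).card := by
      apply ih (Ω \ C)
      · intro C' hC'
        have hd : Disjoint C' C := h4 C' (Finset.mem_insert_of_mem hC') C
          (Finset.mem_insert_self _ _) (by rintro rfl; exact hC hC')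
        intro x hx
        exact Finset.mem_sdiff.2 ⟨h1 C' (Finset.mem_insert_of_mem hC') hx,
          Finset.disjoint_left.1 hd hx⟩
      · exact fun C' hC' => h2 C' (Finset.mem_insert_of_mem hC')
      · exact fun C' hC' => h3 C' (Finset.mem_insert_of_mem hC')
      · exact fun C' hC' C'' hC'' => h4 C' (Finset.mem_insert_of_mem hC') C''
          (Finset.mem_insert_of_mem hC'')
    have hΩ : (Ω \ C).card = Ω.card - C.card := Finset.card_sdiff_of_subset hCΩ
    have hCle : C.card ≤ Ω.card := Finset.card_le_card hCΩ
    have hkey : (2 ^ C.card - 1) * 4 ≤ 3 * 2 ^ C.card := by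
      interval_cases h : C.card <;> norm_num
    rw [Finset.card_insert_of_notMem hC]
    calc A.card * 4 ^ (𝒞'.card + 1)
        ≤ ((2 ^ C.card - 1) * A'.card) * 4 ^ (𝒞'.card + 1) :=
          Nat.mul_le_mul_right _ (hinj.trans_eq hprod)
      _ = ((2 ^ C.card - 1) * 4) * (A'.card * 4 ^ 𝒞'.card) := by ring
      _ ≤ (3 * 2 ^ C.card) * (3 ^ 𝒞'.card * 2 ^ (Ω \ C).card) := Nat.mul_le_mul hkey hih
      _ = 3 ^ (𝒞'.card + 1) * (2 ^ C.card * 2 ^ (Ω.card - C.card)) := by rw [hΩ]; ring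
      _ = 3 ^ (𝒞'.card + 1) * 2 ^ Ω.card := by rw [← pow_add, Nat.add_sub_cancel' hCle]

/-- Fix a fringe set `F ⊆ B_r(nP)` missing exactly `l` points of
`B_r(nP)`, and let `k ∈ M_r(nP + nP)`. Among subsets `S ⊆ L(nP)` with
`S ∩ B_r(nP) = F`, the proportion of those with `k ∉ S + S` is at most
`(3/4)^{|L(nP ∩ (k - nP))|/2 - l}`. -/
theorem stmt12 {D : ℕ} (P : Set (Pt D)) (hP : IsLatticePolytope P)
    (n : ℕ) (r : ℝ) (hr : 0 < r) (F : Set (Pt D))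
    (hF : F ⊆ ballFringe ((n : ℝ) • P) r) (l : ℕ)
    (hl : (ballFringe ((n : ℝ) • P) r \ F).ncard = l)
    (k : Pt D) (hk : k ∈ middlePts ((n : ℝ) • P + (n : ℝ) • P) r) :
    (({S : Set (Pt D) | S ⊆ latticePts ((n : ℝ) • P) ∧
        S ∩ ballFringe ((n : ℝ) • P) r = F ∧ k ∉ S + S}).ncard : ℝ) /
      (({S : Set (Pt D) | S ⊆ latticePts ((n : ℝ) • P) ∧
        S ∩ ballFringe ((n : ℝ) • P) r = F}).ncard : ℝ) ≤
      ((3 : ℝ) / 4) ^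
        (((latticePts ((n : ℝ) • P ∩ (({k} : Set (Pt D)) - (n : ℝ) • P))).ncard : ℝ) / 2
          - (l : ℝ)) := by
  classical
  set Q : Set (Pt D) := (n : ℝ) • P with hQdef
  set NPs : Set (Pt D) := latticePts Q with hNPdef
  set Br : Set (Pt D) := ballFringe Q r with hBrdef
  set Tset : Set (Pt D) := latticePts (Q ∩ (({k} : Set (Pt D)) - Q)) with hTdef
  set Aset : Set (Set (Pt D)) := {S | S ⊆ NPs ∧ S ∩ Br = F ∧ k ∉ S + S} with hAdef
  set Bset : Set (Set (Pt D)) := {S | S ⊆ NPs ∧ S ∩ Br = F} with hBdef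
  -- basic facts
  have hQbdd : Bornology.IsBounded Q := by
    obtain ⟨⟨V, hVfin, rfl⟩, -⟩ := hP
    exact ((isBounded_convexHull).2 hVfin.isBounded).smul₀ _
  have hNPfin : NPs.Finite := lattice_finite hQbdd
  have hBrNP : Br ⊆ NPs := fun q hq => hq.1
  have hFNP : F ⊆ NPs := fun q hq => hBrNP (hF hq)
  have hFreefin : (NPs \ Br).Finite := (Set.Finite.diff hNPfin : (NPs \ Br).Finite)
  set FreeF : Finset (Pt D) := hFreefin.toFinset with hFreeFdef
  have hFreeF_mem : ∀ x, x ∈ FreeF ↔ x ∈ NPs ∧ x ∉ Br := by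
    intro x; rw [hFreeFdef, Set.Finite.mem_toFinset]; exact Iff.rfl
  have hFreeF_notF : ∀ x ∈ FreeF, x ∉ F := fun x hx hxF =>
    ((hFreeF_mem x).1 hx).2 (hF hxF)
  set φ : Finset (Pt D) → Set (Pt D) := fun S₀ => F ∪ (↑S₀ : Set (Pt D)) with hφdef
  -- decomposition of admissible S
  have hdecomp : ∀ S : Set (Pt D), S ⊆ NPs → S ∩ Br = F →
      ∃ S₀ : Finset (Pt D), S₀ ∈ FreeF.powerset ∧ S = φ S₀ ∧
        (↑S₀ : Set (Pt D)) = S \ Br := by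
    intro S hsub hcap
    have hSfin : S.Finite := hNPfin.subset hsub
    refine ⟨(Set.Finite.diff hSfin : (S \ Br).Finite).toFinset, ?_, ?_, Set.Finite.coe_toFinset _⟩
    · rw [Finset.mem_powerset]
      intro x hx
      rw [Set.Finite.mem_toFinset] at hx
      exact (hFreeF_mem x).2 ⟨hsub hx.1, hx.2⟩
    · ext x
      rw [hφdef]
      simp only [Set.mem_union, Set.Finite.coe_toFinset, Set.mem_diff]
      constructor
      · intro hxS
        by_cases hxBr : x ∈ Br
        · exact Or.inl (hcap ▸ Set.mem_inter hxS hxBr)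
        · exact Or.inr ⟨hxS, hxBr⟩
      · rintro (hxF | ⟨hxS, -⟩)
        · exact (hcap ▸ hxF : x ∈ S ∩ Br).1
        · exact hxS
  have hφinj : Set.InjOn φ ↑FreeF.powerset := by
    intro S₀ h₀ S₁ h₁ h
    rw [Finset.mem_coe, Finset.mem_powerset] at h₀ h₁
    apply Finset.coe_injective
    have key : ∀ S₂ : Finset (Pt D), S₂ ⊆ FreeF → (↑S₂ : Set (Pt D)) = φ S₂ \ F := by
      intro S₂ hS₂
      ext x
      simp only [hφdef, Set.mem_diff, Set.mem_union, Finset.mem_coe]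
      constructor
      · intro hx; exact ⟨Or.inr hx, hFreeF_notF x (hS₂ hx)⟩
      · rintro ⟨hx | hx, hxF⟩
        · exact absurd hx hxF
        · exact hx
    rw [key S₀ h₀, key S₁ h₁, h]
  have hBset_eq : Bset = φ '' ↑FreeF.powerset := by
    ext S
    constructor
    · rintro ⟨hsub, hcap⟩
      obtain ⟨S₀, hS₀, hSeq, -⟩ := hdecomp S hsub hcap
      exact ⟨S₀, by exact_mod_cast hS₀, hSeq.symm⟩
    · rintro ⟨S₀, hS₀, rfl⟩
      rw [Finset.mem_coe, Finset.mem_powerset] at hS₀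
      constructor
      · intro x hx
        rcases hx with hx | hx
        · exact hFNP hx
        · exact ((hFreeF_mem x).1 (hS₀ hx)).1
      · ext x
        simp only [hφdef, Set.mem_inter_iff, Set.mem_union, Finset.mem_coe]
        constructor
        · rintro ⟨hx | hx, hxBr⟩
          · exact hx
          · exact absurd hxBr ((hFreeF_mem x).1 (hS₀ hx)).2
        · intro hx; exact ⟨Or.inl hx, hF hx⟩
  have hBcard : Bset.ncard = 2 ^ FreeF.card := by
    rw [hBset_eq, Set.ncard_image_of_injOn hφinj, Set.ncard_coe_finset,
      Finset.card_powerset]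
  -- facts about T
  have hkQQ : k ∈ latticePts (Q + Q) := hk.1
  have hkZ : ∀ i, ∃ z : ℤ, k i = (z : ℝ) := hkQQ.2
  have hmemsub : ∀ x : Pt D, x ∈ (({k} : Set (Pt D)) - Q) ↔ k - x ∈ Q := by
    intro x
    constructor
    · rintro ⟨a, ha, b, hb, rfl⟩
      rw [Set.mem_singleton_iff] at ha
      subst ha
      simpa using hb
    · intro h
      exact ⟨k, rfl, k - x, h, sub_sub_cancel k x⟩
  have hTchar : ∀ x, x ∈ Tset ↔ x ∈ Q ∧ k - x ∈ Q ∧ ∀ i, ∃ z : ℤ, x i = (z : ℝ) := by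
    intro x
    rw [hTdef]
    constructor
    · rintro ⟨⟨hx1, hx2⟩, hx3⟩
      exact ⟨hx1, (hmemsub x).1 hx2, hx3⟩
    · rintro ⟨hx1, hx2, hx3⟩
      exact ⟨⟨hx1, (hmemsub x).2 hx2⟩, hx3⟩
  have hTNP : Tset ⊆ NPs := by
    intro x hx
    exact ⟨((hTchar x).1 hx).1, ((hTchar x).1 hx).2.2⟩
  have hswap : ∀ x ∈ Tset, k - x ∈ Tset := by
    intro x hx
    obtain ⟨hx1, hx2, hx3⟩ := (hTchar x).1 hx
    refine (hTchar (k - x)).2 ⟨hx2, by simpa using hx1, ?_⟩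
    intro i
    obtain ⟨z, hz⟩ := hkZ i
    obtain ⟨w, hw⟩ := hx3 i
    exact ⟨z - w, by push_cast [← hz, ← hw]; rfl⟩
  have hTfin : Tset.Finite := hNPfin.subset hTNP
  set TF : Finset (Pt D) := hTfin.toFinset with hTFdef
  have hTF_mem : ∀ x, x ∈ TF ↔ x ∈ Tset := fun x => Set.Finite.mem_toFinset _
  -- orbits
  set orb : Pt D → Finset (Pt D) := fun x => {x, k - x} with horbdef
  have horb_self : ∀ x, x ∈ orb x := fun x => Finset.mem_insert_self _ _
  have horb_snd : ∀ x, k - x ∈ orb x := fun x =>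
    Finset.mem_insert_of_mem (Finset.mem_singleton_self _)
  have horb_card : ∀ x, (orb x).card ≤ 2 := by
    intro x
    exact (Finset.card_insert_le _ _).trans (by simp)
  have horb_swap : ∀ x, orb (k - x) = orb x := by
    intro x
    rw [horbdef]
    simp only [sub_sub_cancel]
    exact Finset.pair_comm _ _
  have horb_eq : ∀ x y z : Pt D, z ∈ orb x → z ∈ orb y → orb x = orb y := by
    intro x y z hzx hzy
    have h1 : orb z = orb x := by
      rcases Finset.mem_insert.1 hzx with rfl | hz
      · rfl
      · rw [Finset.mem_singleton.1 hz, horb_swap]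
    have h2 : orb z = orb y := by
      rcases Finset.mem_insert.1 hzy with rfl | hz
      · rfl
      · rw [Finset.mem_singleton.1 hz, horb_swap]
    rw [← h1, h2]
  set O : Finset (Finset (Pt D)) := TF.image orb with hOdef
  have horbT : ∀ o ∈ O, ∀ y ∈ o, y ∈ Tset := by
    intro o ho y hy
    obtain ⟨x, hx, rfl⟩ := Finset.mem_image.1 ho
    rcases Finset.mem_insert.1 hy with rfl | hz
    · exact (hTF_mem y).1 hx
    · rw [Finset.mem_singleton.1 hz]
      exact hswap x ((hTF_mem x).1 hx)
  set Ogood : Finset (Finset (Pt D)) := O.filter (fun o => ∀ y ∈ o, ¬ (y ∈ Br \ F))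
    with hOgooddef
  set g : ℕ := Ogood.card with hgdef
  -- (1) TF.card ≤ 2 * O.card
  have hTO : TF.card ≤ 2 * O.card := by
    have hcover : TF ⊆ O.biUnion id := by
      intro x hx
      exact Finset.mem_biUnion.2 ⟨orb x, Finset.mem_image_of_mem _ hx, horb_self x⟩
    calc TF.card ≤ (O.biUnion id).card := Finset.card_le_card hcover
      _ ≤ ∑ o ∈ O, (id o).card := Finset.card_biUnion_le
      _ ≤ ∑ _o ∈ O, 2 := by
          apply Finset.sum_le_sum
          intro o ho
          obtain ⟨x, -, rfl⟩ := Finset.mem_image.1 ho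
          exact horb_card x
      _ = 2 * O.card := by rw [Finset.sum_const, smul_eq_mul, mul_comm]
  -- (2) O.card ≤ g + l
  have hBadfin : (Br \ F).Finite := (Set.Finite.diff (hNPfin.subset hBrNP) : (Br \ F).Finite)
  have hOgl : O.card ≤ g + l := by
    have hsplit : g + (O.filter (fun o => ¬ ∀ y ∈ o, ¬ (y ∈ Br \ F))).card = O.card := by
      rw [hgdef, hOgooddef]
      exact Finset.card_filter_add_card_filter_not ..
    have hbad : (O.filter (fun o => ¬ ∀ y ∈ o, ¬ (y ∈ Br \ F))).card ≤ l := by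
      rw [← hl, Set.ncard_eq_toFinset_card _ hBadfin]
      apply Finset.card_le_card_of_injOn
        (fun o => if h : ∃ y ∈ o, y ∈ Br \ F then h.choose else k)
      · intro o ho
        rw [Finset.mem_coe, Finset.mem_filter] at ho
        push_neg at ho
        obtain ⟨y, hy, hyBF⟩ := ho.2
        have hex : ∃ y ∈ o, y ∈ Br \ F := ⟨y, hy, hyBF⟩
        simp only [Finset.mem_coe]
        rw [dif_pos hex, Set.Finite.mem_toFinset]
        exact hex.choose_spec.2
      · intro o ho o' ho' heq
        rw [Finset.mem_coe, Finset.mem_filter] at ho ho'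
        have hex : ∃ y ∈ o, y ∈ Br \ F := by
          have := ho.2; push_neg at this; obtain ⟨y, hy, h⟩ := this; exact ⟨y, hy, h⟩
        have hex' : ∃ y ∈ o', y ∈ Br \ F := by
          have := ho'.2; push_neg at this; obtain ⟨y, hy, h⟩ := this; exact ⟨y, hy, h⟩
        simp only [dif_pos hex, dif_pos hex'] at heq
        obtain ⟨x, -, rfl⟩ := Finset.mem_image.1 ho.1
        obtain ⟨x', -, rfl⟩ := Finset.mem_image.1 ho'.1
        exact horb_eq x x' _ hex.choose_spec.1 (heq ▸ hex'.choose_spec.1)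
    omega
  -- main case split
  by_cases hcase : ∃ x ∈ Tset, x ∈ F ∧ k - x ∈ F
  · -- numerator set is empty
    obtain ⟨x, hxT, hxF, hkxF⟩ := hcase
    have hAempty : Aset = ∅ := by
      rw [Set.eq_empty_iff_forall_notMem]
      rintro S ⟨hsub, hcap, hks⟩
      have hFS : F ⊆ S := by rw [← hcap]; exact Set.inter_subset_left
      have : k ∈ S + S := by
        have := Set.add_mem_add (hFS hxF) (hFS hkxF)
        rwa [add_sub_cancel] at this
      exact hks this
    rw [hAempty]
    simp only [Set.ncard_empty, Nat.cast_zero, zero_div]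
    positivity
  · push_neg at hcase
    -- good orbits have a free element
    have hgood_elt : ∀ o ∈ Ogood, ∀ y ∈ o, y ∈ FreeF ∨ y ∈ F := by
      intro o ho y hy
      rw [hOgooddef, Finset.mem_filter] at ho
      have hyT : y ∈ Tset := horbT o ho.1 y hy
      have hyNP : y ∈ NPs := hTNP hyT
      by_cases hyBr : y ∈ Br
      · right
        by_contra hyF
        exact ho.2 y hy ⟨hyBr, hyF⟩
      · left
        exact (hFreeF_mem y).2 ⟨hyNP, hyBr⟩
    have hgood_ne : ∀ o ∈ Ogood, (o ∩ FreeF).Nonempty := by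
      intro o ho
      have ho' : o ∈ O := (Finset.mem_filter.1 ho).1
      obtain ⟨x, hx, rfl⟩ := Finset.mem_image.1 ho'
      have hxT : x ∈ Tset := (hTF_mem x).1 hx
      rcases hgood_elt _ ho x (horb_self x) with hxFr | hxF
      · exact ⟨x, Finset.mem_inter.2 ⟨horb_self x, hxFr⟩⟩
      · rcases hgood_elt _ ho (k - x) (horb_snd x) with hkFr | hkF
        · exact ⟨k - x, Finset.mem_inter.2 ⟨horb_snd x, hkFr⟩⟩
        · exact absurd hkF (hcase x hxT hxF)
    set 𝒞 : Finset (Finset (Pt D)) := Ogood.image (fun o => o ∩ FreeF) with h𝒞def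
    have h𝒞card : 𝒞.card = g := by
      rw [h𝒞def, hgdef]
      apply Finset.card_image_of_injOn
      intro o ho o' ho' heq
      obtain ⟨z, hz⟩ := hgood_ne o ho
      have heq' : o ∩ FreeF = o' ∩ FreeF := heq
      have hz' : z ∈ o' ∩ FreeF := heq' ▸ hz
      have ho1 := (Finset.mem_filter.1 ho).1
      have ho1' := (Finset.mem_filter.1 ho').1
      obtain ⟨x, -, rfl⟩ := Finset.mem_image.1 ho1
      obtain ⟨x', -, rfl⟩ := Finset.mem_image.1 ho1'
      exact horb_eq x x' z (Finset.mem_inter.1 hz).1 (Finset.mem_inter.1 hz').1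
    have h𝒞mem : ∀ C ∈ 𝒞, ∃ o ∈ Ogood, C = o ∩ FreeF := by
      intro C hC
      obtain ⟨o, ho, rfl⟩ := Finset.mem_image.1 hC
      exact ⟨o, ho, rfl⟩
    -- counting
    set AF : Finset (Finset (Pt D)) :=
      FreeF.powerset.filter (fun S₀ => ∀ C ∈ 𝒞, ¬ C ⊆ S₀) with hAFdef
    have hAsub : Aset ⊆ φ '' ↑AF := by
      rintro S ⟨hsub, hcap, hks⟩
      obtain ⟨S₀, hS₀, hSeq, hS₀coe⟩ := hdecomp S hsub hcap
      refine ⟨S₀, ?_, hSeq.symm⟩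
      rw [Finset.mem_coe, hAFdef, Finset.mem_filter]
      refine ⟨hS₀, ?_⟩
      intro C hC hCS₀
      obtain ⟨o, ho, rfl⟩ := h𝒞mem C hC
      have ho' : o ∈ O := (Finset.mem_filter.1 ho).1
      obtain ⟨x, hx, rfl⟩ := Finset.mem_image.1 ho'
      have hoS : ∀ y ∈ orb x, y ∈ S := by
        intro y hy
        rcases hgood_elt _ ho y hy with hyFr | hyF
        · have hyC : y ∈ orb x ∩ FreeF := Finset.mem_inter.2 ⟨hy, hyFr⟩
          have : y ∈ (↑S₀ : Set (Pt D)) := hCS₀ hyC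
          rw [hS₀coe] at this
          exact this.1
        · rw [← hcap] at hyF
          exact hyF.1
      apply hks
      have := Set.add_mem_add (hoS x (horb_self x)) (hoS (k - x) (horb_snd x))
      rwa [add_sub_cancel] at this
    have hAcard : Aset.ncard ≤ AF.card := by
      calc Aset.ncard ≤ (φ '' ↑AF).ncard :=
            Set.ncard_le_ncard hAsub ((AF : Set (Finset (Pt D))).toFinite.image φ)
        _ ≤ (↑AF : Set (Finset (Pt D))).ncard := Set.ncard_image_le (Set.toFinite _)
        _ = AF.card := Set.ncard_coe_finset _
    have hcount : AF.card * 4 ^ g ≤ 3 ^ g * 2 ^ FreeF.card := by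
      have := count_avoid 𝒞 FreeF
        (fun C hC => by
          obtain ⟨o, -, rfl⟩ := h𝒞mem C hC
          exact Finset.inter_subset_right)
        (fun C hC => by
          obtain ⟨o, ho, rfl⟩ := h𝒞mem C hC
          exact hgood_ne o ho)
        (fun C hC => by
          obtain ⟨o, ho, rfl⟩ := h𝒞mem C hC
          have ho' := (Finset.mem_filter.1 ho).1
          obtain ⟨x, -, rfl⟩ := Finset.mem_image.1 ho'
          exact (Finset.card_le_card Finset.inter_subset_left).trans (horb_card x))
        (fun C hC C' hC' hne => by
          obtain ⟨o, ho, rfl⟩ := h𝒞mem C hC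
          obtain ⟨o', ho', rfl⟩ := h𝒞mem C' hC'
          rw [Finset.disjoint_left]
          intro z hz hz'
          apply hne
          have ho1 := (Finset.mem_filter.1 ho).1
          have ho1' := (Finset.mem_filter.1 ho').1
          obtain ⟨x, -, rfl⟩ := Finset.mem_image.1 ho1
          obtain ⟨x', -, rfl⟩ := Finset.mem_image.1 ho1'
          rw [horb_eq x x' z (Finset.mem_inter.1 hz).1 (Finset.mem_inter.1 hz').1])
      rwa [h𝒞card] at this
    -- final arithmetic
    have hTcard : Tset.ncard = TF.card := Set.ncard_eq_toFinset_card _ hTfin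
    have hexp : (Tset.ncard : ℝ) / 2 - (l : ℝ) ≤ (g : ℝ) := by
      have h1 : (TF.card : ℝ) ≤ 2 * ((g : ℝ) + (l : ℝ)) := by
        have : TF.card ≤ 2 * (g + l) := hTO.trans (Nat.mul_le_mul_left 2 hOgl)
        exact_mod_cast this
      rw [hTcard]
      linarith
    have hstep1 : (Aset.ncard : ℝ) / (Bset.ncard : ℝ) ≤ ((3 : ℝ) / 4) ^ g := by
      rw [hBcard, div_pow]
      rw [div_le_div_iff₀ (by positivity) (by positivity)]
      push_cast
      calc (Aset.ncard : ℝ) * 4 ^ g ≤ (AF.card : ℝ) * 4 ^ g := by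
            have : (Aset.ncard : ℝ) ≤ (AF.card : ℝ) := by exact_mod_cast hAcard
            exact mul_le_mul_of_nonneg_right this (by positivity)
        _ ≤ 3 ^ g * 2 ^ FreeF.card := by exact_mod_cast hcount
    have hstep2 : ((3 : ℝ) / 4) ^ ((g : ℕ) : ℝ) ≤
        ((3 : ℝ) / 4) ^ ((Tset.ncard : ℝ) / 2 - (l : ℝ)) :=
      Real.rpow_le_rpow_of_exponent_ge (by norm_num) (by norm_num) hexp
    calc (Aset.ncard : ℝ) / (Bset.ncard : ℝ) ≤ ((3 : ℝ) / 4) ^ g := hstep1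
      _ = ((3 : ℝ) / 4) ^ ((g : ℕ) : ℝ) := (Real.rpow_natCast _ g).symm
      _ ≤ _ := hstep2
end
end
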